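/- Let e_1 and e_2 be two edges of G with no common endpoint, and let z_1 ≠ z_2 be vertices of G not incident to e_1 or e_2 such that M_1 = {e_1, e_2, z_1} and M_2 = {e_1, e_2, z_2} are both cuts in 𝔐_2(G). Then z_1 and z_2 are adjacent in G and {e_1, e_2, z_1z_2} ∈ 𝔐_3(G); that is, deleting the three edges e_1, e_2 and z_1z_2 from G yields a disconnected graph. -/

import Mathlib

namespace Paper

variable {V : Type*}

/-- `S ⊆ V(G)` is a cutset of `G`: the graph `G − S` is disconnected. -/
def IsCutset (G : SimpleGraph V) (S : Set V) : Prop :=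
  ¬ (G.induce (Sᶜ : Set V)).Connected

/-- A 3-cutset: a cutset of exactly 3 vertices. -/
def IsThreeCutset (G : SimpleGraph V) (S : Set V) : Prop :=
  S.ncard = 3 ∧ IsCutset G S

/-- `G` is triconnected: at least 4 vertices and deleting any at most 2 vertices
leaves a connected graph. -/
def IsTriconnected [Fintype V] (G : SimpleGraph V) : Prop :=
  4 ≤ Fintype.card V ∧
    ∀ X : Set V, X.ncard ≤ 2 → (G.induce (Xᶜ : Set V)).Connected

/-- `x` and `y` both survive the deletion of `R` and lie in the same connected
component of `G − R`. -/
def ReachOutside (G : SimpleGraph V) (R : Set V) (x y : V) : Prop :=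
  ∃ (hx : x ∈ (Rᶜ : Set V)) (hy : y ∈ (Rᶜ : Set V)),
    (G.induce (Rᶜ : Set V)).Reachable ⟨x, hx⟩ ⟨y, hy⟩

/-- `R` splits `X`: two vertices of `X \ R` lie in different connected components
of `G − R`. -/
def Splits (G : SimpleGraph V) (R X : Set V) : Prop :=
  ∃ x ∈ X, ∃ y ∈ X, x ∉ R ∧ y ∉ R ∧ ¬ ReachOutside G R x y

/-- Two 3-cutsets are dependent iff one splits the other. -/
def Dependent (G : SimpleGraph V) (S T : Set V) : Prop :=
  Splits G S T ∨ Splits G T S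

/-- The connected component of `G − R` containing `u` (empty if `u ∈ R`). -/
def compOutside (G : SimpleGraph V) (R : Set V) (u : V) : Set V :=
  {y | ReachOutside G R u y}

/-- `C` is a connected component of `G − R`. -/
def IsCompOutside (G : SimpleGraph V) (R : Set V) (C : Set V) : Prop :=
  ∃ u, u ∉ R ∧ C = compOutside G R u

/-- The graph obtained from `G` by deleting the vertices of `A` (with all incident
edges) and the edges of `E`. -/
def DelVE (G : SimpleGraph V) (A : Set V) (E : Set (Sym2 V)) : SimpleGraph (Aᶜ : Set V) :=
  (G.deleteEdges E).induce (Aᶜ : Set V)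

/-- The mixed set of vertices `A` and edges `E` disconnects `G`. -/
def CutVE (G : SimpleGraph V) (A : Set V) (E : Set (Sym2 V)) : Prop :=
  ¬ (DelVE G A E).Connected

/-- `x` and `y` survive the deletion and lie in the same connected component of
the graph obtained by deleting the vertices of `A` and the edges of `E`. -/
def ReachVE (G : SimpleGraph V) (A : Set V) (E : Set (Sym2 V)) (x y : V) : Prop :=
  ∃ (hx : x ∈ (Aᶜ : Set V)) (hy : y ∈ (Aᶜ : Set V)),
    (DelVE G A E).Reachable ⟨x, hx⟩ ⟨y, hy⟩

/-- The connected component of `G − (A ∪ E)` containing `u`. -/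
def compVE (G : SimpleGraph V) (A : Set V) (E : Set (Sym2 V)) (u : V) : Set V :=
  {y | ReachVE G A E u y}

/-- `C` is a connected component of the graph obtained from `G` by deleting the
vertices of `A` and the edges of `E`. -/
def IsCompVE (G : SimpleGraph V) (A : Set V) (E : Set (Sym2 V)) (C : Set V) : Prop :=
  ∃ u, u ∉ A ∧ C = compVE G A E u

private lemma closed_notReach {K : SimpleGraph V} {s S : Set V}
    (hcl : ∀ u v, K.Adj u v → u ∈ s → v ∈ s → u ∈ S → v ∈ S)
    {a c : V} (ha : a ∈ s) (hc : c ∈ s) (haS : a ∈ S) (hcS : c ∉ S) :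
    ¬ (K.induce s).Reachable ⟨a, ha⟩ ⟨c, hc⟩ := by
  intro hr
  obtain ⟨w⟩ := hr
  suffices h : ∀ (x y : s) (_ : (K.induce s).Walk x y), x.1 ∈ S → y.1 ∈ S from
    hcS (h ⟨a, ha⟩ ⟨c, hc⟩ w haS)
  intro x y w
  induction w with
  | nil => exact fun h => h
  | @cons x y _ hadj p ih => exact fun hx => ih (hcl x.1 y.1 hadj x.2 y.2 hx)

private lemma conn_closed {K : SimpleGraph V} {s S : Set V}
    (hconn : (K.induce s).Connected)
    (hcl : ∀ u v, K.Adj u v → u ∈ s → v ∈ s → u ∈ S → v ∈ S)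
    {a c : V} (ha : a ∈ s) (hc : c ∈ s) (haS : a ∈ S) : c ∈ S := by
  by_contra hcS
  exact closed_notReach hcl ha hc haS hcS (hconn.preconnected ⟨a, ha⟩ ⟨c, hc⟩)

private def RSet (H : SimpleGraph V) (z b : V) : Set V :=
  {v | ∃ (hb : b ∈ ({z}ᶜ : Set V)) (hv : v ∈ ({z}ᶜ : Set V)),
      (H.induce ({z}ᶜ : Set V)).Reachable ⟨b, hb⟩ ⟨v, hv⟩}

private lemma rset_ne {H : SimpleGraph V} {z b v : V} (h : v ∈ RSet H z b) : v ≠ z := by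
  obtain ⟨-, hv, -⟩ := h
  simpa using hv

private lemma rset_self {H : SimpleGraph V} {z b : V} (hbz : b ≠ z) : b ∈ RSet H z b :=
  ⟨by simpa using hbz, by simpa using hbz, SimpleGraph.Reachable.refl _⟩

private lemma rset_adj {H : SimpleGraph V} {z b u v : V} (h : H.Adj u v)
    (hu : u ∈ RSet H z b) (hv : v ≠ z) : v ∈ RSet H z b := by
  obtain ⟨hb, hu', hr⟩ := hu
  exact ⟨hb, by simpa using hv, hr.trans (SimpleGraph.Adj.reachable h)⟩

private lemma rset_compl {H : SimpleGraph V} {z b : V} (hbz : b ≠ z)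
    (hcut : ¬ (H.induce ({z}ᶜ : Set V)).Connected) :
    ∃ w, w ≠ z ∧ w ∉ RSet H z b := by
  by_contra hcon
  push_neg at hcon
  apply hcut
  rw [SimpleGraph.connected_iff]
  refine ⟨?_, ⟨⟨b, by simpa using hbz⟩⟩⟩
  rintro ⟨x, hx⟩ ⟨y, hy⟩
  obtain ⟨hb1, hx2, hrx⟩ := hcon x (by simpa using hx)
  obtain ⟨hb2, hy2, hry⟩ := hcon y (by simpa using hy)
  exact hrx.symm.trans hry

private lemma cross_lemma [Fintype V] {G : SimpleGraph V} (htri : IsTriconnected G)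
    {H : SimpleGraph V} {f g : Sym2 V}
    (hHadj : ∀ u v, G.Adj u v ↔ H.Adj u v ∨ s(u, v) = f ∨ s(u, v) = g)
    {z b : V} (hbz : b ≠ z) (hbg : b ∉ g)
    (hcut : ¬ (H.induce ({z}ᶜ : Set V)).Connected) :
    ∃ p q, f = s(p, q) ∧ p ∈ RSet H z b ∧ q ∉ RSet H z b ∧ q ≠ z := by
  by_contra hnc
  push_neg at hnc
  set A := RSet H z b with hA
  obtain ⟨w, hwz, hwA⟩ := rset_compl hbz hcut
  set P : Set V := {x | ∃ y, g = s(x, y) ∧ x ∈ A ∧ y ∉ A} with hP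
  set X : Set V := insert z P with hX
  have hPsub : P.Subsingleton := by
    rintro x₁ ⟨y₁, hg₁, hx₁, hy₁⟩ x₂ ⟨y₂, hg₂, hx₂, hy₂⟩
    have heq : s(x₁, y₁) = s(x₂, y₂) := by rw [← hg₁, ← hg₂]
    rcases Sym2.eq_iff.mp heq with ⟨h1, h2⟩ | ⟨h1, h2⟩
    · exact h1
    · exact absurd (h1 ▸ hx₁) hy₂
  have hXc : X.ncard ≤ 2 := by
    refine le_trans (Set.ncard_insert_le _ _) ?_
    rcases hPsub.eq_empty_or_singleton with h | ⟨x, h⟩ <;> simp [h]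
  have hzX : z ∈ X := Set.mem_insert _ _
  have hcl : ∀ u v, G.Adj u v → u ∈ Xᶜ → v ∈ Xᶜ → u ∈ {v | v ≠ z ∧ v ∉ A} →
      v ∈ {v | v ≠ z ∧ v ∉ A} := by
    intro u v hadj hu hv ⟨huz, huA⟩
    have hvz : v ≠ z := fun h => hv (h ▸ hzX)
    refine ⟨hvz, fun hvA => ?_⟩
    rcases (hHadj u v).mp hadj with hE | hf | hg
    · exact huA (rset_adj hE.symm hvA huz)
    · exact huz (hnc v u (by rw [← hf, Sym2.eq_swap]) hvA huA)
    · exact hv (Set.mem_insert_iff.mpr (Or.inr ⟨u, by rw [← hg, Sym2.eq_swap], hvA, huA⟩))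
  have hwX : w ∈ Xᶜ := by
    intro h
    rcases Set.mem_insert_iff.mp h with h | h
    · exact hwz h
    · obtain ⟨y, -, hxA, -⟩ := h
      exact hwA hxA
  have hbX : b ∈ Xᶜ := by
    intro h
    rcases Set.mem_insert_iff.mp h with h | h
    · exact hbz h
    · obtain ⟨y, hgy, -, -⟩ := h
      exact hbg (by rw [hgy]; exact Sym2.mem_mk_left _ _)
  have := conn_closed (htri.2 X hXc) hcl hwX hbX ⟨hwz, hwA⟩
  exact this.2 (rset_self hbz)

/-- Lemma `ll32`: two cuts of `𝔐₂(G)` with the same two edges and distinct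
vertices `z₁ ≠ z₂` yield an all-edge cut `{e₁, e₂, z₁z₂} ∈ 𝔐₃(G)`. -/
theorem stmt_7 [Fintype V] (G : SimpleGraph V)
    (htri : IsTriconnected G) (hbig : 6 < Fintype.card V)
    (e₁ e₂ : Sym2 V) (he₁ : e₁ ∈ G.edgeSet) (he₂ : e₂ ∈ G.edgeSet)
    (hdisj : ∀ v : V, ¬ (v ∈ e₁ ∧ v ∈ e₂))
    (z₁ z₂ : V) (hz : z₁ ≠ z₂)
    (hz₁e₁ : z₁ ∉ e₁) (hz₁e₂ : z₁ ∉ e₂) (hz₂e₁ : z₂ ∉ e₁) (hz₂e₂ : z₂ ∉ e₂)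
    (hM₁ : CutVE G {z₁} {e₁, e₂}) (hM₂ : CutVE G {z₂} {e₁, e₂}) :
    G.Adj z₁ z₂ ∧ CutVE G (∅ : Set V) {e₁, e₂, s(z₁, z₂)} := by
  classical
  set H : SimpleGraph V := G.deleteEdges {e₁, e₂} with hHdef
  have hHadj : ∀ u v, G.Adj u v ↔ H.Adj u v ∨ s(u, v) = e₁ ∨ s(u, v) = e₂ := by
    intro u v
    rw [hHdef, SimpleGraph.deleteEdges_adj]
    constructor
    · intro h
      by_cases h1 : s(u, v) = e₁
      · exact Or.inr (Or.inl h1)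
      by_cases h2 : s(u, v) = e₂
      · exact Or.inr (Or.inr h2)
      · exact Or.inl ⟨h, by simp [h1, h2]⟩
    · rintro (⟨h, -⟩ | h | h)
      · exact h
      · exact (G.mem_edgeSet).mp (by rw [h]; exact he₁)
      · exact (G.mem_edgeSet).mp (by rw [h]; exact he₂)
  have hHadj' : ∀ u v, G.Adj u v ↔ H.Adj u v ∨ s(u, v) = e₂ ∨ s(u, v) = e₁ := by
    intro u v
    rw [hHadj u v]
    tauto
  have hM₁' : ¬ (H.induce ({z₁}ᶜ : Set V)).Connected := hM₁
  have hM₂' : ¬ (H.induce ({z₂}ᶜ : Set V)).Connected := hM₂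
  set A : Set V := RSet H z₁ z₂ with hAdef
  set A' : Set V := RSet H z₂ z₁ with hA'def
  have hz₂A : z₂ ∈ A := rset_self hz.symm
  have hz₁A' : z₁ ∈ A' := rset_self hz
  obtain ⟨p₁, q₁, he₁s, hp₁A, hq₁A, hq₁z₁⟩ :=
    cross_lemma htri hHadj hz.symm hz₂e₂ hM₁'
  obtain ⟨p₂, q₂, he₂s, hp₂A, hq₂A, hq₂z₁⟩ :=
    cross_lemma htri hHadj' hz.symm hz₂e₁ hM₁'
  obtain ⟨p₁', q₁', he₁s', hp₁'A', hq₁'A', hq₁'z₂⟩ :=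
    cross_lemma htri hHadj hz hz₁e₂ hM₂'
  obtain ⟨p₂', q₂', he₂s', hp₂'A', hq₂'A', hq₂'z₂⟩ :=
    cross_lemma htri hHadj' hz hz₁e₁ hM₂'
  -- endpoint membership facts
  have hp₁e₁ : p₁ ∈ e₁ := by rw [he₁s]; exact Sym2.mem_mk_left _ _
  have hq₁e₁ : q₁ ∈ e₁ := by rw [he₁s]; exact Sym2.mem_mk_right _ _
  have hp₂e₂ : p₂ ∈ e₂ := by rw [he₂s]; exact Sym2.mem_mk_left _ _
  have hq₂e₂ : q₂ ∈ e₂ := by rw [he₂s]; exact Sym2.mem_mk_right _ _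
  have hp₁z₁ : p₁ ≠ z₁ := fun h => hz₁e₁ (h ▸ hp₁e₁)
  have hp₂z₁ : p₂ ≠ z₁ := fun h => hz₁e₂ (h ▸ hp₂e₂)
  have hq₁z₂ : q₁ ≠ z₂ := fun h => hz₂e₁ (h ▸ hq₁e₁)
  have hq₂z₂ : q₂ ≠ z₂ := fun h => hz₂e₂ (h ▸ hq₂e₂)
  have hp₁z₂ : p₁ ≠ z₂ := fun h => hz₂e₁ (h ▸ hp₁e₁)
  have hp₂z₂ : p₂ ≠ z₂ := fun h => hz₂e₂ (h ▸ hp₂e₂)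
  -- Step 1 : every vertex outside A (other than z₁) belongs to A'
  have hWA' : ∀ w, w ≠ z₁ → w ∉ A → w ∈ A' := by
    intro w hwz hwA
    by_contra hwA'
    set X : Set V := {p₁, p₂} with hXdef
    have hXc : X.ncard ≤ 2 :=
      le_trans (Set.ncard_insert_le _ _) (by simp)
    have hcl : ∀ u v, G.Adj u v → u ∈ Xᶜ → v ∈ Xᶜ →
        u ∈ {v | v ≠ z₁ ∧ v ∉ A ∧ v ∉ A'} → v ∈ {v | v ≠ z₁ ∧ v ∉ A ∧ v ∉ A'} := by
      intro u v hadj hu hv ⟨huz, huA, huA'⟩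
      have huz₂ : u ≠ z₂ := fun h => huA (h ▸ hz₂A)
      rcases (hHadj u v).mp hadj with hE | hf | hg
      · have hvz₁ : v ≠ z₁ := by
          rintro rfl
          exact huA' (rset_adj hE.symm hz₁A' huz₂)
        exact ⟨hvz₁, fun hvA => huA (rset_adj hE.symm hvA huz),
          fun hvA' => huA' (rset_adj hE.symm hvA' huz₂)⟩
      · rcases Sym2.eq_iff.mp (hf.trans he₁s) with ⟨rfl, rfl⟩ | ⟨rfl, rfl⟩
        · exact absurd hp₁A huA
        · exact absurd (Set.mem_insert _ _) hv
      · rcases Sym2.eq_iff.mp (hg.trans he₂s) with ⟨rfl, rfl⟩ | ⟨rfl, rfl⟩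
        · exact absurd hp₂A huA
        · exact absurd (Set.mem_insert_iff.mpr (Or.inr rfl)) hv
    have hwX : w ∈ Xᶜ := by
      intro h
      rcases Set.mem_insert_iff.mp h with h | h
      · exact hwA (h ▸ hp₁A)
      · exact hwA ((Set.mem_singleton_iff.mp h) ▸ hp₂A)
    have hz₁X : z₁ ∈ Xᶜ := by
      intro h
      rcases Set.mem_insert_iff.mp h with h | h
      · exact hp₁z₁ h.symm
      · exact hp₂z₁ (Set.mem_singleton_iff.mp h).symm
    have := conn_closed (htri.2 X hXc) hcl hwX hz₁X ⟨hwz, hwA, hwA'⟩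
    exact this.1 rfl
  have hq₁A' : q₁ ∈ A' := hWA' q₁ hq₁z₁ hq₁A
  have hq₂A' : q₂ ∈ A' := hWA' q₂ hq₂z₁ hq₂A
  -- match the two decompositions of e₁, e₂ to locate p₁, p₂ w.r.t. A'
  have hp₁A' : p₁ ∉ A' := by
    rcases Sym2.eq_iff.mp (he₁s.symm.trans he₁s') with ⟨rfl, rfl⟩ | ⟨rfl, rfl⟩
    · exact absurd hq₁A' hq₁'A'
    · exact hq₁'A'
  have hp₂A' : p₂ ∉ A' := by
    rcases Sym2.eq_iff.mp (he₂s.symm.trans he₂s') with ⟨rfl, rfl⟩ | ⟨rfl, rfl⟩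
    · exact absurd hq₂A' hq₂'A'
    · exact hq₂'A'
  -- Step 2 : A and A' are disjoint
  have hA₀ : ∀ v, v ∈ A → v ∈ A' → False := by
    intro v₀ hv₀A hv₀A'
    set X : Set V := {z₁, z₂} with hXdef
    have hXc : X.ncard ≤ 2 :=
      le_trans (Set.ncard_insert_le _ _) (by simp)
    have hcl : ∀ u v, G.Adj u v → u ∈ Xᶜ → v ∈ Xᶜ →
        u ∈ {v | v ∈ A ∧ v ∈ A'} → v ∈ {v | v ∈ A ∧ v ∈ A'} := by
      intro u v hadj hu hv ⟨huA, huA'⟩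
      have hvz₁ : v ≠ z₁ := fun h => hv (h ▸ Set.mem_insert _ _)
      have hvz₂ : v ≠ z₂ := fun h => hv (h ▸ Set.mem_insert_iff.mpr (Or.inr rfl))
      rcases (hHadj u v).mp hadj with hE | hf | hg
      · exact ⟨rset_adj hE huA hvz₁, rset_adj hE huA' hvz₂⟩
      · rcases Sym2.eq_iff.mp (hf.trans he₁s) with ⟨rfl, rfl⟩ | ⟨rfl, rfl⟩
        · exact absurd huA' hp₁A'
        · exact absurd huA hq₁A
      · rcases Sym2.eq_iff.mp (hg.trans he₂s) with ⟨rfl, rfl⟩ | ⟨rfl, rfl⟩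
        · exact absurd huA' hp₂A'
        · exact absurd huA hq₂A
    have hv₀X : v₀ ∈ Xᶜ := by
      intro h
      rcases Set.mem_insert_iff.mp h with h | h
      · exact rset_ne hv₀A h
      · exact rset_ne hv₀A' (Set.mem_singleton_iff.mp h)
    have hq₁X : q₁ ∈ Xᶜ := by
      intro h
      rcases Set.mem_insert_iff.mp h with h | h
      · exact hq₁z₁ h
      · exact hq₁z₂ (Set.mem_singleton_iff.mp h)
    have := conn_closed (htri.2 X hXc) hcl hv₀X hq₁X ⟨hv₀A, hv₀A'⟩
    exact hq₁A this.1
  have hz₂A' : z₂ ∉ A' := fun h => rset_ne h rfl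
  -- Step 3 : z₁ and z₂ are adjacent
  have hGadj : G.Adj z₁ z₂ := by
    by_contra hnadj
    set X : Set V := {q₁, q₂} with hXdef
    have hXc : X.ncard ≤ 2 :=
      le_trans (Set.ncard_insert_le _ _) (by simp)
    have hcl : ∀ u v, G.Adj u v → u ∈ Xᶜ → v ∈ Xᶜ →
        u ∈ {v | v ∉ A'} → v ∈ {v | v ∉ A'} := by
      intro u v hadj hu hv huA'
      intro hvA'
      have hvz₂ : v ≠ z₂ := rset_ne hvA'
      rcases (hHadj u v).mp hadj with hE | hf | hg
      · by_cases huz₂ : u = z₂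
        · subst huz₂
          by_cases hvz₁ : v = z₁
          · subst hvz₁
            exact hnadj (((hHadj u v).mpr (Or.inl hE)).symm)
          · exact hA₀ v (rset_adj hE hz₂A hvz₁) hvA'
        · exact huA' (rset_adj hE.symm hvA' huz₂)
      · rcases Sym2.eq_iff.mp (hf.trans he₁s) with ⟨rfl, rfl⟩ | ⟨rfl, rfl⟩
        · exact hv (Set.mem_insert _ _)
        · exact huA' hq₁A'
      · rcases Sym2.eq_iff.mp (hg.trans he₂s) with ⟨rfl, rfl⟩ | ⟨rfl, rfl⟩
        · exact hv (Set.mem_insert_iff.mpr (Or.inr rfl))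
        · exact huA' hq₂A'
    have hz₂X : z₂ ∈ Xᶜ := by
      intro h
      rcases Set.mem_insert_iff.mp h with h | h
      · exact hq₁z₂ h.symm
      · exact hq₂z₂ (Set.mem_singleton_iff.mp h).symm
    have hz₁X : z₁ ∈ Xᶜ := by
      intro h
      rcases Set.mem_insert_iff.mp h with h | h
      · exact hq₁z₁ h.symm
      · exact hq₂z₁ (Set.mem_singleton_iff.mp h).symm
    have := conn_closed (htri.2 X hXc) hcl hz₂X hz₁X hz₂A'
    exact this hz₁A'
  refine ⟨hGadj, ?_⟩
  -- Step 4 : the three edges form a cut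
  intro hconn
  set K : SimpleGraph V := G.deleteEdges {e₁, e₂, s(z₁, z₂)} with hKdef
  have hcl : ∀ u v, K.Adj u v → u ∈ ((∅ : Set V)ᶜ) → v ∈ ((∅ : Set V)ᶜ) →
      u ∈ {v | v ∉ A'} → v ∈ {v | v ∉ A'} := by
    intro u v hadj _ _ huA'
    intro hvA'
    rw [hKdef, SimpleGraph.deleteEdges_adj] at hadj
    obtain ⟨hG, hnot⟩ := hadj
    have h1 : s(u, v) ≠ e₁ := fun h => hnot (by rw [h]; exact Set.mem_insert _ _)
    have h2 : s(u, v) ≠ e₂ := fun h => hnot (by rw [h]; simp)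
    have h3 : s(u, v) ≠ s(z₁, z₂) := fun h => hnot (by rw [h]; simp)
    have hvz₂ : v ≠ z₂ := rset_ne hvA'
    rcases (hHadj u v).mp hG with hE | hf | hg
    · by_cases huz₂ : u = z₂
      · subst huz₂
        by_cases hvz₁ : v = z₁
        · subst hvz₁
          exact h3 (Sym2.eq_swap)
        · exact hA₀ v (rset_adj hE hz₂A hvz₁) hvA'
      · exact huA' (rset_adj hE.symm hvA' huz₂)
    · exact h1 hf
    · exact h2 hg
  have hreach := hconn.preconnected ⟨z₂, Set.notMem_empty _⟩ ⟨z₁, Set.notMem_empty _⟩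
  exact closed_notReach hcl (Set.notMem_empty z₂) (Set.notMem_empty z₁) hz₂A'
    (fun h => h hz₁A') hreach

end Paper
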